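/- For every natural number k ≥ 1, every 0 < α < 1, and all x, y > 0, the converse neo-classical inequality holds: ∑_{j=0}^k C(αk, αj) x^{αj} y^{α(k-j)} > (x+y)^{αk}, where C(a,b) = Γ(a+1)/(Γ(b+1)Γ(a-b+1)) is the generalized binomial coefficient. -/

import Mathlib

open MeasureTheory Set intervalIntegral

noncomputable def genBinom (a b : ℝ) : ℝ :=
  Real.Gamma (a + 1) / (Real.Gamma (b + 1) * Real.Gamma (a - b + 1))

namespace CNC5

lemma betaIntegrable {c b : ℝ} (hc : 0 ≤ c) (hb : -1 < b) :
    IntervalIntegrable (fun v : ℝ => v ^ c * (1 - v) ^ b) volume 0 1 := by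
  have hg : IntervalIntegrable (fun v : ℝ => (1 - v) ^ b) volume 0 1 := by
    have := ((intervalIntegrable_rpow' (a := 0) (b := 1) hb).comp_sub_left 1)
    norm_num at this
    exact this.symm
  refine hg.mono_fun ((Real.continuous_rpow_const hc).aestronglyMeasurable.mul
    hg.def'.aestronglyMeasurable) ?_
  rw [Filter.EventuallyLE, ae_restrict_iff' measurableSet_uIoc]
  refine Filter.Eventually.of_forall fun v hv => ?_
  rw [Set.uIoc_of_le (zero_le_one)] at hv
  have hv0 : 0 < v := hv.1
  have hv1 : v ≤ 1 := hv.2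
  have h2 : (0:ℝ) ≤ (1 - v) ^ b := Real.rpow_nonneg (by linarith) b
  simp only [Real.norm_eq_abs]
  rw [abs_mul, abs_of_nonneg (Real.rpow_nonneg hv0.le c), abs_of_nonneg h2]
  nth_rewrite 2 [← one_mul ((1-v)^b)]
  apply mul_le_mul_of_nonneg_right _ h2
  exact Real.rpow_le_one hv0.le hv1 hc

lemma betaReal {a b : ℝ} (ha : 0 < a) (hb : 0 < b) :
    ∫ v in (0:ℝ)..1, v ^ (a - 1) * (1 - v) ^ (b - 1) =
      Real.Gamma a * Real.Gamma b / Real.Gamma (a + b) := by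
  have hab : (0:ℝ) < a + b := by linarith
  have hne : Real.Gamma (a + b) ≠ 0 := (Real.Gamma_pos_of_pos hab).ne'
  rw [eq_div_iff hne]
  have key : Complex.Gamma a * Complex.Gamma b
      = Complex.Gamma (a + b) * Complex.betaIntegral a b :=
    Complex.Gamma_mul_Gamma_eq_betaIntegral (by simpa using ha) (by simpa using hb)
  have hbeta : Complex.betaIntegral a b
      = ((∫ v in (0:ℝ)..1, v ^ (a - 1) * (1 - v) ^ (b - 1) : ℝ) : ℂ) := by
    rw [Complex.betaIntegral, ← intervalIntegral.integral_ofReal]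
    refine intervalIntegral.integral_congr fun v hv => ?_
    rw [uIcc_of_le zero_le_one] at hv
    rw [Complex.ofReal_mul, Complex.ofReal_cpow hv.1,
      Complex.ofReal_cpow (by linarith [hv.2] : (0:ℝ) ≤ 1 - v)]
    push_cast
    ring
  rw [hbeta] at key
  have : ((Real.Gamma a * Real.Gamma b : ℝ) : ℂ)
      = (((∫ v in (0:ℝ)..1, v ^ (a - 1) * (1 - v) ^ (b - 1)) * Real.Gamma (a + b) : ℝ) : ℂ) := by
    push_cast
    rw [← Complex.Gamma_ofReal, ← Complex.Gamma_ofReal, ← Complex.Gamma_ofReal]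
    push_cast
    rw [key]; ring
  exact_mod_cast this.symm

lemma betaReal' {α : ℝ} (hα0 : 0 < α) {c : ℝ} (hc : 0 ≤ c) :
    (∫ v in (0:ℝ)..1, v ^ c * (1 - v) ^ (α - 1)) =
      Real.Gamma (c + 1) * Real.Gamma α / Real.Gamma (c + α + 1) := by
  have := betaReal (a := c + 1) (b := α) (by linarith) hα0
  simp only [add_sub_cancel_right] at this
  rw [this]
  ring_nf


lemma key0 {α : ℝ} (hα0 : 0 < α) (hα1 : α < 1) {β : ℝ} (hβ : 0 ≤ β) {t : ℝ}
    (ht0 : 0 < t) (ht1 : t < 1) :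
    Real.Gamma (β + α + 1) / (Real.Gamma (β + 1) * Real.Gamma α) *
      ∫ w in (0:ℝ)..t, w ^ β * (1 - w) ^ (α - 1) < t ^ (β + α) := by
  set K := Real.Gamma (β + α + 1) / (Real.Gamma (β + 1) * Real.Gamma α) with hKdef
  have hKpos : 0 < K := div_pos (Real.Gamma_pos_of_pos (by linarith))
    (mul_pos (Real.Gamma_pos_of_pos (by linarith)) (Real.Gamma_pos_of_pos hα0))
  -- substitution w = t * u
  have hsub : (∫ w in (0:ℝ)..t, w ^ β * (1 - w) ^ (α - 1))
      = t * ∫ u in (0:ℝ)..1, (t * u) ^ β * (1 - t * u) ^ (α - 1) := by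
    have := intervalIntegral.smul_integral_comp_mul_left
      (a := 0) (b := 1) (fun w => w ^ β * (1 - w) ^ (α - 1)) t
    simp only [smul_eq_mul, mul_zero, mul_one] at this
    rw [← this]
  have hpt : (∫ u in (0:ℝ)..1, (t * u) ^ β * (1 - t * u) ^ (α - 1))
      = t ^ β * ∫ u in (0:ℝ)..1, u ^ β * (1 - t * u) ^ (α - 1) := by
    rw [← intervalIntegral.integral_const_mul]
    refine intervalIntegral.integral_congr fun u hu => ?_
    rw [uIcc_of_le zero_le_one] at hu
    rw [Real.mul_rpow ht0.le hu.1]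
    ring
  have hcont : IntervalIntegrable (fun u : ℝ => u ^ β * (1 - t * u) ^ (α - 1)) volume 0 1 := by
    apply ContinuousOn.intervalIntegrable
    rw [uIcc_of_le zero_le_one]
    refine ContinuousOn.mul ?_ ?_
    · exact (Real.continuous_rpow_const hβ).continuousOn
    · refine ContinuousOn.rpow_const ?_ fun u hu => Or.inl ?_
      · exact (continuous_const.sub (continuous_const.mul continuous_id)).continuousOn
      · have := hu.1; have := hu.2
        nlinarith
  have hcomp : (∫ u in (0:ℝ)..1, u ^ β * (1 - t * u) ^ (α - 1))
      ≤ ∫ u in (0:ℝ)..1, u ^ β * (1 - u) ^ (α - 1) := by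
    refine intervalIntegral.integral_mono_ae_restrict zero_le_one hcont
      (betaIntegrable hβ (by linarith)) ?_
    have h1 : ∀ᵐ u ∂(volume : Measure ℝ), u ≠ 1 := by
      rw [MeasureTheory.ae_iff]
      have : {u : ℝ | ¬ u ≠ 1} = {1} := by ext u; simp
      rw [this]
      exact Real.volume_singleton
    filter_upwards [MeasureTheory.ae_restrict_mem measurableSet_Icc,
      h1.filter_mono (MeasureTheory.ae_mono Measure.restrict_le_self)] with u hu hne
    have hu1 : u < 1 := lt_of_le_of_ne hu.2 hne
    have hb1 : (1:ℝ) - u ≤ 1 - t * u := by nlinarith [hu.1]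
    exact mul_le_mul_of_nonneg_left
      (Real.rpow_le_rpow_of_nonpos (by linarith) hb1 (by linarith))
      (Real.rpow_nonneg hu.1 β)
  have hB : (∫ u in (0:ℝ)..1, u ^ β * (1 - u) ^ (α - 1))
      = Real.Gamma (β + 1) * Real.Gamma α / Real.Gamma (β + α + 1) := betaReal' hα0 hβ
  have hKB : K * (Real.Gamma (β + 1) * Real.Gamma α / Real.Gamma (β + α + 1)) = 1 := by
    rw [hKdef]
    field_simp
  calc K * ∫ w in (0:ℝ)..t, w ^ β * (1 - w) ^ (α - 1)
      = t * t ^ β * (K * ∫ u in (0:ℝ)..1, u ^ β * (1 - t * u) ^ (α - 1)) := by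
        rw [hsub, hpt]; ring
    _ ≤ t * t ^ β * (K * ∫ u in (0:ℝ)..1, u ^ β * (1 - u) ^ (α - 1)) := by
        have h0 : 0 ≤ t * t ^ β := by positivity
        exact mul_le_mul_of_nonneg_left (mul_le_mul_of_nonneg_left hcomp hKpos.le) h0
    _ = t * t ^ β := by rw [hB, hKB, mul_one]
    _ = t ^ (β + 1) := by
        rw [Real.rpow_add ht0, Real.rpow_one]; ring
    _ < t ^ (β + α) := Real.rpow_lt_rpow_of_exponent_gt ht0 ht1 (by linarith)

lemma key {α : ℝ} (hα0 : 0 < α) (hα1 : α < 1) {β : ℝ} (hβ : 0 ≤ β) {x y : ℝ}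
    (hx : 0 < x) (hy : 0 < y) :
    (x + y) ^ (β + α) < y ^ (β + α) +
      Real.Gamma (β + α + 1) / (Real.Gamma (β + 1) * Real.Gamma α) * x ^ α *
        ∫ v in (0:ℝ)..1, (1 - v) ^ (α - 1) * (x * v + y) ^ β := by
  set s := x + y with hs
  have hspos : 0 < s := by positivity
  set t := y / s with ht
  have ht0 : 0 < t := by positivity
  have ht1 : t < 1 := by
    rw [ht, div_lt_one hspos]; linarith
  set K := Real.Gamma (β + α + 1) / (Real.Gamma (β + 1) * Real.Gamma α) with hK
  have hKpos : 0 < K := div_pos (Real.Gamma_pos_of_pos (by linarith))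
    (mul_pos (Real.Gamma_pos_of_pos (by linarith)) (Real.Gamma_pos_of_pos hα0))
  -- Step A: ∫ v in 0..1, (1-v)^(α-1)(xv+y)^β = x^(-α) ∫ u in y..s, (s-u)^(α-1) u^β
  have eA : (∫ v in (0:ℝ)..1, (1 - v) ^ (α - 1) * (x * v + y) ^ β)
      = x ^ (-α) * ∫ u in y..s, (s - u) ^ (α - 1) * u ^ β := by
    have e1 : (∫ v in (0:ℝ)..1, (1 - v) ^ (α - 1) * (x * v + y) ^ β)
        = ∫ v in (0:ℝ)..1, x ^ (1 - α) * ((s - (x * v + y)) ^ (α - 1) * (x * v + y) ^ β) := by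
      refine intervalIntegral.integral_congr fun v hv => ?_
      rw [uIcc_of_le zero_le_one] at hv
      have h1 : s - (x * v + y) = x * (1 - v) := by rw [hs]; ring
      rw [h1, Real.mul_rpow hx.le (by linarith [hv.2])]
      rw [show x ^ (1 - α) * (x ^ (α - 1) * (1 - v) ^ (α - 1) * (x * v + y) ^ β)
        = (x ^ (1 - α) * x ^ (α - 1)) * ((1 - v) ^ (α - 1) * (x * v + y) ^ β) by ring]
      rw [← Real.rpow_add hx]
      norm_num
    have e2 : (∫ v in (0:ℝ)..1, (s - (x * v + y)) ^ (α - 1) * (x * v + y) ^ β)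
        = x⁻¹ * ∫ u in y..s, (s - u) ^ (α - 1) * u ^ β := by
      have := intervalIntegral.integral_comp_mul_add
        (a := 0) (b := 1) (f := fun u => (s - u) ^ (α - 1) * u ^ β) hx.ne' y
      simp only [mul_zero, zero_add, mul_one, smul_eq_mul] at this
      rw [this, hs]
    rw [e1, intervalIntegral.integral_const_mul, e2]
    rw [show x ^ (1 - α) * (x⁻¹ * ∫ u in y..s, (s - u) ^ (α - 1) * u ^ β)
      = (x ^ (1 - α) * x⁻¹) * ∫ u in y..s, (s - u) ^ (α - 1) * u ^ β by ring]
    congr 1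
    rw [← Real.rpow_neg_one x, ← Real.rpow_add hx]
    congr 1
    ring
  -- Step B: ∫ u in y..s = s^(α+β) ∫ w in t..1
  have eB : (∫ u in y..s, (s - u) ^ (α - 1) * u ^ β)
      = s ^ (β + α) * ∫ w in t..1, w ^ β * (1 - w) ^ (α - 1) := by
    have e3 := intervalIntegral.smul_integral_comp_mul_left
      (a := t) (b := 1) (fun u => (s - u) ^ (α - 1) * u ^ β) s
    simp only [smul_eq_mul, mul_one] at e3
    have hst : s * t = y := by rw [ht]; field_simp
    rw [hst] at e3
    rw [← e3]
    have e4 : (∫ w in t..1, (s - s * w) ^ (α - 1) * (s * w) ^ β)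
        = ∫ w in t..1, (s ^ (α - 1) * s ^ β) * (w ^ β * (1 - w) ^ (α - 1)) := by
      refine intervalIntegral.integral_congr fun w hw => ?_
      rw [uIcc_of_le (by linarith : t ≤ 1)] at hw
      have hw0 : 0 ≤ w := le_trans ht0.le hw.1
      have h1 : s - s * w = s * (1 - w) := by ring
      rw [h1, Real.mul_rpow hspos.le (by linarith [hw.2]), Real.mul_rpow hspos.le hw0]
      ring
    rw [e4, intervalIntegral.integral_const_mul]
    rw [show s * (s ^ (α - 1) * s ^ β * ∫ w in t..1, w ^ β * (1 - w) ^ (α - 1))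
      = (s * s ^ (α - 1) * s ^ β) * ∫ w in t..1, w ^ β * (1 - w) ^ (α - 1) by ring]
    congr 1
    rw [show β + α = 1 + (α - 1) + β by ring, Real.rpow_add hspos, Real.rpow_add hspos,
      Real.rpow_one]
  -- split the t..1 integral
  have hi1 : IntervalIntegrable (fun w : ℝ => w ^ β * (1 - w) ^ (α - 1)) volume 0 t :=
    (betaIntegrable hβ (by linarith)).mono_set
      (by rw [uIcc_of_le ht0.le, uIcc_of_le zero_le_one]; exact Icc_subset_Icc le_rfl ht1.le)
  have hi2 : IntervalIntegrable (fun w : ℝ => w ^ β * (1 - w) ^ (α - 1)) volume t 1 :=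
    (betaIntegrable hβ (by linarith)).mono_set
      (by rw [uIcc_of_le ht1.le, uIcc_of_le zero_le_one]; exact Icc_subset_Icc ht0.le le_rfl)
  have hsplit : (∫ w in t..1, w ^ β * (1 - w) ^ (α - 1))
      = (∫ w in (0:ℝ)..1, w ^ β * (1 - w) ^ (α - 1))
        - ∫ w in (0:ℝ)..t, w ^ β * (1 - w) ^ (α - 1) := by
    rw [← intervalIntegral.integral_add_adjacent_intervals hi1 hi2]
    ring
  have hfull : (∫ w in (0:ℝ)..1, w ^ β * (1 - w) ^ (α - 1))
      = Real.Gamma (β + 1) * Real.Gamma α / Real.Gamma (β + α + 1) := betaReal' hα0 hβ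
  have hKB : K * (Real.Gamma (β + 1) * Real.Gamma α / Real.Gamma (β + α + 1)) = 1 := by
    rw [hK]; field_simp
  -- assemble
  have hxx : x ^ α * x ^ (-α) = 1 := by
    rw [← Real.rpow_add hx]; norm_num
  have h041 : K * x ^ α * (∫ v in (0:ℝ)..1, (1 - v) ^ (α - 1) * (x * v + y) ^ β)
      = s ^ (β + α) * (1 - K * ∫ w in (0:ℝ)..t, w ^ β * (1 - w) ^ (α - 1)) := by
    rw [eA, eB, hsplit, hfull]
    rw [show K * x ^ α * (x ^ (-α) * (s ^ (β + α) *
        (Real.Gamma (β + 1) * Real.Gamma α / Real.Gamma (β + α + 1)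
          - ∫ w in (0:ℝ)..t, w ^ β * (1 - w) ^ (α - 1))))
      = (x ^ α * x ^ (-α)) * (s ^ (β + α) *
        (K * (Real.Gamma (β + 1) * Real.Gamma α / Real.Gamma (β + α + 1))
          - K * ∫ w in (0:ℝ)..t, w ^ β * (1 - w) ^ (α - 1))) by ring]
    rw [hxx, hKB]
    ring
  rw [h041]
  set I := ∫ w in (0:ℝ)..t, w ^ β * (1 - w) ^ (α - 1) with hI
  have h5 : K * I < y ^ (β + α) / s ^ (β + α) := by
    have := key0 hα0 hα1 hβ ht0 ht1
    rw [← hK, ← hI] at this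
    calc K * I < t ^ (β + α) := this
      _ = y ^ (β + α) / s ^ (β + α) := by rw [ht, Real.div_rpow hy.le hspos.le]
  have hspow : 0 < s ^ (β + α) := Real.rpow_pos_of_pos hspos _
  have h6 : s ^ (β + α) * (K * I) < y ^ (β + α) := by
    calc s ^ (β + α) * (K * I) < s ^ (β + α) * (y ^ (β + α) / s ^ (β + α)) :=
          mul_lt_mul_of_pos_left h5 hspow
      _ = y ^ (β + α) := by field_simp
  have h7 : s ^ (β + α) * (1 - K * I) = s ^ (β + α) - s ^ (β + α) * (K * I) := by ring
  linarith

noncomputable def P (α : ℝ) (n : ℕ) (x y : ℝ) : ℝ :=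
  ∑ j ∈ Finset.range (n + 1), genBinom (α * n) (α * j) * x ^ (α * j) * y ^ (α * ((n : ℝ) - j))


lemma coeff {α : ℝ} (hα0 : 0 < α) {u v : ℝ} (hv : 0 ≤ v) (huv : v ≤ u) :
    Real.Gamma (u + α + 1) / (Real.Gamma (u + 1) * Real.Gamma α) *
      (genBinom u v * (Real.Gamma (v + 1) * Real.Gamma α / Real.Gamma (v + α + 1)))
    = genBinom (u + α) (v + α) := by
  unfold genBinom
  rw [show u + α - (v + α) = u - v by ring]
  have g1 := Real.Gamma_pos_of_pos (show (0:ℝ) < u + 1 by linarith)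
  have g2 := Real.Gamma_pos_of_pos hα0
  have g3 := Real.Gamma_pos_of_pos (show (0:ℝ) < v + 1 by linarith)
  have g4 := Real.Gamma_pos_of_pos (show (0:ℝ) < v + α + 1 by linarith)
  have g5 := Real.Gamma_pos_of_pos (show (0:ℝ) < u - v + 1 by linarith)
  field_simp


lemma recursion {α : ℝ} (hα0 : 0 < α) (hα1 : α < 1) (n : ℕ) {x y : ℝ}
    (hx : 0 < x) (hy : 0 < y) :
    P α (n + 1) x y = y ^ (α * ((n : ℝ) + 1)) +
      Real.Gamma (α * ((n : ℝ) + 1) + 1) / (Real.Gamma (α * n + 1) * Real.Gamma α) * x ^ α *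
        ∫ v in (0:ℝ)..1, (1 - v) ^ (α - 1) * P α n (x * v) y := by
  have hjint : ∀ j : ℕ, IntervalIntegrable
      (fun v : ℝ => (genBinom (α * n) (α * j) * x ^ (α * j) * y ^ (α * ((n : ℝ) - j))) *
        (v ^ (α * j) * (1 - v) ^ (α - 1))) volume 0 1 := by
    intro j
    exact (betaIntegrable (by positivity) (by linarith)).const_mul _
  have hint : (∫ v in (0:ℝ)..1, (1 - v) ^ (α - 1) * P α n (x * v) y)
      = ∑ j ∈ Finset.range (n + 1),
          genBinom (α * n) (α * j) * x ^ (α * j) * y ^ (α * ((n : ℝ) - j)) *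
            (Real.Gamma (α * j + 1) * Real.Gamma α / Real.Gamma (α * j + α + 1)) := by
    have e1 : (∫ v in (0:ℝ)..1, (1 - v) ^ (α - 1) * P α n (x * v) y)
        = ∫ v in (0:ℝ)..1, ∑ j ∈ Finset.range (n + 1),
            (genBinom (α * n) (α * j) * x ^ (α * j) * y ^ (α * ((n : ℝ) - j))) *
              (v ^ (α * j) * (1 - v) ^ (α - 1)) := by
      refine intervalIntegral.integral_congr fun v hv => ?_
      rw [uIcc_of_le zero_le_one] at hv
      unfold P
      rw [Finset.mul_sum]
      refine Finset.sum_congr rfl fun j _ => ?_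
      rw [Real.mul_rpow hx.le hv.1]
      ring
    rw [e1, intervalIntegral.integral_finset_sum (fun j _ => hjint j)]
    refine Finset.sum_congr rfl fun j _ => ?_
    rw [intervalIntegral.integral_const_mul, betaReal' hα0 (by positivity : 0 ≤ α * (j:ℝ))]
  rw [hint, Finset.mul_sum]
  -- now handle the sum over range (n+2) on the LHS
  have hP : P α (n + 1) x y = ∑ i ∈ Finset.range (n + 2),
      genBinom (α * ((n : ℝ) + 1)) (α * i) * x ^ (α * i) * y ^ (α * (((n : ℝ) + 1) - i)) := by
    unfold P
    refine Finset.sum_congr (by norm_num) fun i _ => ?_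
    push_cast
    rfl
  rw [hP, Finset.sum_range_succ']
  have hzero : genBinom (α * ((n : ℝ) + 1)) (α * (0 : ℕ)) * x ^ (α * (0 : ℕ)) *
      y ^ (α * (((n : ℝ) + 1) - (0 : ℕ))) = y ^ (α * ((n : ℝ) + 1)) := by
    have hne : Real.Gamma (α * ((n : ℝ) + 1) + 1) ≠ 0 :=
      (Real.Gamma_pos_of_pos (by positivity)).ne'
    unfold genBinom
    simp [Real.Gamma_one, hne]
  rw [hzero, add_comm]
  congr 1
  refine Finset.sum_congr rfl fun j hj => ?_
  have hj' : (j : ℝ) ≤ (n : ℝ) := by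
    exact_mod_cast Nat.lt_succ_iff.mp (Finset.mem_range.mp hj)
  have hc := coeff hα0 (u := α * n) (v := α * j) (by positivity)
    (by nlinarith)
  push_cast
  rw [show α * (((n : ℝ) + 1) - ((j : ℝ) + 1)) = α * ((n : ℝ) - j) by ring,
    show α * ((j : ℝ) + 1) = α * j + α by ring,
    show α * ((n : ℝ) + 1) = α * n + α by ring]
  rw [Real.rpow_add hx (α * j) α]
  rw [← hc]
  rw [show α * (n:ℝ) + α + 1 = α * ((n:ℝ) + 1) + 1 by ring]
  ring

lemma oneSubIntegrable {α : ℝ} (hα0 : 0 < α) (hα1 : α < 1) :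
    IntervalIntegrable (fun v : ℝ => (1 - v) ^ (α - 1)) volume 0 1 := by
  have := betaIntegrable (le_refl (0:ℝ)) (show (-1:ℝ) < α - 1 by linarith)
  simpa [Real.rpow_zero] using this

lemma Pintegrable {α : ℝ} (hα0 : 0 < α) (hα1 : α < 1) (n : ℕ) {x y : ℝ}
    (hx : 0 < x) (hy : 0 < y) :
    IntervalIntegrable (fun v : ℝ => (1 - v) ^ (α - 1) * P α n (x * v) y) volume 0 1 := by
  have hg : IntervalIntegrable (fun v : ℝ => ∑ j ∈ Finset.range (n + 1),
      (genBinom (α * n) (α * j) * x ^ (α * j) * y ^ (α * ((n : ℝ) - j))) *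
        (v ^ (α * j) * (1 - v) ^ (α - 1))) volume 0 1 := by
    have h := IntervalIntegrable.sum (μ := volume) (a := 0) (b := 1) (Finset.range (n + 1))
      (f := fun j (v : ℝ) => (genBinom (α * n) (α * j) * x ^ (α * j) * y ^ (α * ((n : ℝ) - j))) *
        (v ^ (α * j) * (1 - v) ^ (α - 1)))
      (fun j _ => (betaIntegrable (by positivity) (by linarith)).const_mul _)
    have he : (∑ j ∈ Finset.range (n + 1), fun (v : ℝ) =>
        (genBinom (α * n) (α * j) * x ^ (α * j) * y ^ (α * ((n : ℝ) - j))) *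
          (v ^ (α * j) * (1 - v) ^ (α - 1)))
        = fun v : ℝ => ∑ j ∈ Finset.range (n + 1),
          (genBinom (α * n) (α * j) * x ^ (α * j) * y ^ (α * ((n : ℝ) - j))) *
            (v ^ (α * j) * (1 - v) ^ (α - 1)) := by
      ext v
      simp
    rwa [he] at h
  refine hg.congr_ae ?_
  rw [Filter.EventuallyEq, ae_restrict_iff' measurableSet_uIoc]
  refine Filter.Eventually.of_forall fun v hv => ?_
  rw [Set.uIoc_of_le zero_le_one] at hv
  unfold P
  rw [Finset.mul_sum]
  refine (Finset.sum_congr rfl fun j _ => ?_).symm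
  rw [Real.mul_rpow hx.le hv.1.le]
  ring

lemma fIntegrable {α : ℝ} (hα0 : 0 < α) (hα1 : α < 1) {β : ℝ} (hβ : 0 ≤ β) {x y : ℝ}
    (hx : 0 < x) (hy : 0 < y) :
    IntervalIntegrable (fun v : ℝ => (1 - v) ^ (α - 1) * (x * v + y) ^ β) volume 0 1 := by
  have hg : IntervalIntegrable (fun v : ℝ => (x + y) ^ β * (1 - v) ^ (α - 1)) volume 0 1 :=
    (oneSubIntegrable hα0 hα1).const_mul _
  refine hg.mono_fun ?_ ?_
  · exact ((oneSubIntegrable hα0 hα1).def'.aestronglyMeasurable).mul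
      (((Real.continuous_rpow_const hβ).comp
        ((continuous_const.mul continuous_id).add continuous_const)).aestronglyMeasurable)
  · rw [Filter.EventuallyLE, ae_restrict_iff' measurableSet_uIoc]
    refine Filter.Eventually.of_forall fun v hv => ?_
    rw [Set.uIoc_of_le zero_le_one] at hv
    have h1 : (0:ℝ) ≤ (1 - v) ^ (α - 1) := Real.rpow_nonneg (by linarith [hv.2]) _
    have h2 : (0:ℝ) ≤ (x * v + y) ^ β := Real.rpow_nonneg (by nlinarith [hv.1.le]) _
    simp only [Real.norm_eq_abs]
    rw [abs_mul, abs_of_nonneg h1, abs_of_nonneg h2, abs_mul,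
      abs_of_nonneg (Real.rpow_nonneg (by positivity : (0:ℝ) ≤ x + y) β), abs_of_nonneg h1]
    rw [mul_comm ((x+y)^β)]
    apply mul_le_mul_of_nonneg_left _ h1
    apply Real.rpow_le_rpow (by nlinarith [hv.1.le]) (by nlinarith [hv.2]) hβ

lemma step {α : ℝ} (hα0 : 0 < α) (hα1 : α < 1) (n : ℕ) {y : ℝ} (hy : 0 < y)
    (IH : ∀ u : ℝ, 0 < u → (u + y) ^ (α * n) ≤ P α n u y) {x : ℝ} (hx : 0 < x) :
    (x + y) ^ (α * ((n : ℝ) + 1)) < P α (n + 1) x y := by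
  rw [recursion hα0 hα1 n hx hy]
  have hβ : (0:ℝ) ≤ α * n := by positivity
  have hmono : (∫ v in (0:ℝ)..1, (1 - v) ^ (α - 1) * (x * v + y) ^ (α * n))
      ≤ ∫ v in (0:ℝ)..1, (1 - v) ^ (α - 1) * P α n (x * v) y := by
    refine intervalIntegral.integral_mono_ae_restrict zero_le_one
      (fIntegrable hα0 hα1 hβ hx hy) (Pintegrable hα0 hα1 n hx hy) ?_
    have h1 : ∀ᵐ u ∂(volume : Measure ℝ), u ≠ 0 := by
      rw [MeasureTheory.ae_iff]
      have : {u : ℝ | ¬ u ≠ 0} = {0} := by ext u; simp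
      rw [this]
      exact Real.volume_singleton
    filter_upwards [MeasureTheory.ae_restrict_mem measurableSet_Icc,
      h1.filter_mono (MeasureTheory.ae_mono Measure.restrict_le_self)] with v hv hne
    have hv0 : 0 < v := lt_of_le_of_ne hv.1 (Ne.symm hne)
    exact mul_le_mul_of_nonneg_left (IH (x * v) (by positivity))
      (Real.rpow_nonneg (by linarith [hv.2]) _)
  have hkey := key hα0 hα1 hβ hx hy
  rw [show α * (n:ℝ) + α = α * ((n:ℝ) + 1) by ring] at hkey
  have hKx : (0:ℝ) ≤ Real.Gamma (α * ((n : ℝ) + 1) + 1) /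
      (Real.Gamma (α * n + 1) * Real.Gamma α) * x ^ α := by
    have := Real.Gamma_pos_of_pos (show (0:ℝ) < α * ((n : ℝ) + 1) + 1 by positivity)
    have := Real.Gamma_pos_of_pos (show (0:ℝ) < α * (n:ℝ) + 1 by positivity)
    have := Real.Gamma_pos_of_pos hα0
    positivity
  calc (x + y) ^ (α * ((n : ℝ) + 1))
      < y ^ (α * ((n : ℝ) + 1)) +
        Real.Gamma (α * ((n : ℝ) + 1) + 1) / (Real.Gamma (α * n + 1) * Real.Gamma α) * x ^ α *
          ∫ v in (0:ℝ)..1, (1 - v) ^ (α - 1) * (x * v + y) ^ (α * n) := hkey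
    _ ≤ y ^ (α * ((n : ℝ) + 1)) +
        Real.Gamma (α * ((n : ℝ) + 1) + 1) / (Real.Gamma (α * n + 1) * Real.Gamma α) * x ^ α *
          ∫ v in (0:ℝ)..1, (1 - v) ^ (α - 1) * P α n (x * v) y := by
        have := mul_le_mul_of_nonneg_left hmono hKx
        linarith

lemma nonstrict {α : ℝ} (hα0 : 0 < α) (hα1 : α < 1) {y : ℝ} (hy : 0 < y) :
    ∀ n : ℕ, ∀ x : ℝ, 0 < x → (x + y) ^ (α * n) ≤ P α n x y := by
  intro n
  induction n with
  | zero =>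
    intro x hx
    unfold P
    have h1 : genBinom 0 0 = 1 := by
      unfold genBinom
      norm_num [Real.Gamma_one]
    simp [h1]
  | succ n ih =>
    intro x hx
    have := step hα0 hα1 n hy (fun u hu => ih u hu) hx
    have hc : ((n + 1 : ℕ) : ℝ) = (n : ℝ) + 1 := by push_cast; ring
    rw [hc]
    exact this.le

end CNC5

theorem converse_neoclassical (k : ℕ) (hk : 1 ≤ k) (α : ℝ) (hα0 : 0 < α) (hα1 : α < 1)
    (x y : ℝ) (hx : 0 < x) (hy : 0 < y) :
    (x + y) ^ (α * k) <
      ∑ j ∈ Finset.range (k + 1),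
        genBinom (α * k) (α * j) * x ^ (α * j) * y ^ (α * (k - j : ℕ)) := by
  obtain ⟨m, rfl⟩ : ∃ m, k = m + 1 := ⟨k - 1, (Nat.succ_pred_eq_of_pos hk).symm⟩
  have hsum : (∑ j ∈ Finset.range (m + 1 + 1),
      genBinom (α * ((m + 1 : ℕ) : ℝ)) (α * j) * x ^ (α * j) * y ^ (α * ((m + 1 - j : ℕ) : ℝ)))
      = CNC5.P α (m + 1) x y := by
    unfold CNC5.P
    refine Finset.sum_congr rfl fun j hj => ?_
    have hj' : j ≤ m + 1 := Nat.lt_succ_iff.mp (Finset.mem_range.mp hj)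
    rw [Nat.cast_sub hj']
  rw [hsum]
  have := CNC5.step hα0 hα1 m hy (fun u hu => CNC5.nonstrict hα0 hα1 hy m u hu) hx
  have hc : ((m + 1 : ℕ) : ℝ) = (m : ℝ) + 1 := by push_cast; ring
  rw [hc]
  exact this
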